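/- For a tangential equable quadrilateral OABC with consecutive side lengths a,b,c,d (so a+c=b+d and area equals perimeter, inradius 2), one has (K_A − (a+b))(K_O − (a+d)) = bd − ac, where K_A is the area of triangle OAB and K_O is the area of triangle COA. -/

import Mathlib

/-- Signed area of the triangle with vertices `P`, `Q`, `R` in the Euclidean plane. -/
noncomputable def sarea2 (P Q R : EuclideanSpace ℝ (Fin 2)) : ℝ :=
  ((Q 0 - P 0) * (R 1 - P 1) - (Q 1 - P 1) * (R 0 - P 0)) / 2

/-- For a tangential equable quadrilateral `OABC` (vertices regarded as vectors from
`O = 0`, inradius `2`, so the incenter `I` satisfies `K_O • I = a • C + d • A` and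
`K_A • (I - A) = a • (B - A) - b • A`), one has
`(K_A - (a+b)) * (K_O - (a+d)) = b*d - a*c`. -/
theorem stmt2 (A B C I : EuclideanSpace ℝ (Fin 2)) (a b c d KO KA KC : ℝ)
    (ha : a = dist (0 : EuclideanSpace ℝ (Fin 2)) A) (hb : b = dist A B)
    (hc : c = dist B C) (hd : d = dist C (0 : EuclideanSpace ℝ (Fin 2)))
    (hKO : KO = sarea2 C 0 A) (hKA : KA = sarea2 0 A B) (hKC : KC = sarea2 B C 0)
    (hKOpos : 0 < KO) (hKApos : 0 < KA)
    (htang : a + c = b + d)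
    (hequable : KA + KC = 2 * (a + c))
    (hI1 : KO • I = a • C + d • A)
    (hI2 : KA • (I - A) = a • (B - A) - b • A) :
    (KA - (a + b)) * (KO - (a + d)) = b * d - a * c := by
  have hA0 : a ≠ 0 := by
    intro h
    have hda : dist (0 : EuclideanSpace ℝ (Fin 2)) A = 0 := ha.symm.trans h
    have hA : (0 : EuclideanSpace ℝ (Fin 2)) = A := dist_eq_zero.mp hda
    rw [← hA] at hKA
    simp [sarea2] at hKA
    rw [hKA] at hKApos
    exact lt_irrefl 0 hKApos
  have e10 : KO * I 0 = a * C 0 + d * A 0 := by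
    have := congrArg (fun v => v 0) hI1
    simpa [PiLp.smul_apply, PiLp.add_apply, smul_eq_mul] using this
  have e11 : KO * I 1 = a * C 1 + d * A 1 := by
    have := congrArg (fun v => v 1) hI1
    simpa [PiLp.smul_apply, PiLp.add_apply, smul_eq_mul] using this
  have e20 : KA * (I 0 - A 0) = a * (B 0 - A 0) - b * A 0 := by
    have := congrArg (fun v => v 0) hI2
    simpa [PiLp.smul_apply, PiLp.add_apply, PiLp.sub_apply, smul_eq_mul] using this
  have e21 : KA * (I 1 - A 1) = a * (B 1 - A 1) - b * A 1 := by
    have := congrArg (fun v => v 1) hI2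
    simpa [PiLp.smul_apply, PiLp.add_apply, PiLp.sub_apply, smul_eq_mul] using this
  have hq0 : KO * (a * B 0 + (KA - a - b) * A 0) = KA * (a * C 0 + d * A 0) := by
    have h0 : KO * (KA * I 0) = KA * (a * C 0 + d * A 0) := by
      rw [← e10]; ring
    linear_combination h0 - KO * e20
  have hq1 : KO * (a * B 1 + (KA - a - b) * A 1) = KA * (a * C 1 + d * A 1) := by
    have h1 : KO * (KA * I 1) = KA * (a * C 1 + d * A 1) := by
      rw [← e11]; ring
    linear_combination h1 - KO * e21
  have hcross : (a * B 0 + (KA - a - b) * A 0) * (a * C 1 + d * A 1)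
      = (a * B 1 + (KA - a - b) * A 1) * (a * C 0 + d * A 0) := by
    apply mul_left_cancel₀ (mul_ne_zero (ne_of_gt hKApos) (ne_of_gt hKOpos))
    linear_combination (KA * (a * C 1 + d * A 1)) * hq0 - (KA * (a * C 0 + d * A 0)) * hq1
  have hKOc : 2 * KO = A 0 * C 1 - A 1 * C 0 := by rw [hKO]; simp only [sarea2, PiLp.zero_apply]; ring
  have hKAc : 2 * KA = A 0 * B 1 - A 1 * B 0 := by rw [hKA]; simp only [sarea2, PiLp.zero_apply]; ring
  have hKCc : 2 * KC = B 0 * C 1 - B 1 * C 0 := by rw [hKC]; simp only [sarea2, PiLp.zero_apply]; ring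
  have E1 : a * KC + (KA - a - b) * KO = d * KA := by
    have h2a : (2 * a) ≠ 0 := mul_ne_zero two_ne_zero hA0
    apply mul_left_cancel₀ h2a
    linear_combination a ^ 2 * hKCc + a * (KA - a - b) * hKOc - (a * d) * hKAc + hcross
  linear_combination E1 - a * hequable - a * htang
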